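/- Let E ⊆ (ℕ → ℕ) be an eventually different family, R : E → (ℕ → ℕ) any function, and define E' = {g_{h,R(h)} : h ∈ E}, where g_{h,z}(2m) = h(m) and g_{h,z}(2m+1) = #̃(h ↾ (2m+1), z ↾ (2m+1)) for a fixed bijection #̃ on pairs of equal-length finite sequences. Then E' is an eventually different family, and if E is maximal then so is E'. -/
import Mathlib


def EvDiff (f g : ℕ → ℕ) : Prop := ∃ n : ℕ, ∀ m : ℕ, n ≤ m → f m ≠ g m

def EDFam (E : Set (ℕ → ℕ)) : Prop := ∀ f ∈ E, ∀ g ∈ E, f ≠ g → EvDiff f g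

/-- `gfun e h z` is the function with `g (2m) = h m` and
`g (2m+1) = e (h ↾ (2m+1), z ↾ (2m+1))`. -/
def gfun (e : (Σ n : ℕ, (Fin n → ℕ) × (Fin n → ℕ)) → ℕ) (h z : ℕ → ℕ) : ℕ → ℕ :=
  fun n => if n % 2 = 0 then h (n / 2) else e ⟨n, fun i => h i.1, fun i => z i.1⟩

theorem stmt7 (e : (Σ n : ℕ, (Fin n → ℕ) × (Fin n → ℕ)) → ℕ)
    (he : Function.Bijective e)
    (E : Set (ℕ → ℕ)) (R : (ℕ → ℕ) → (ℕ → ℕ)) (hE : EDFam E) :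
    EDFam ((fun h => gfun e h (R h)) '' E) ∧
      ((∀ f : ℕ → ℕ, ∃ g ∈ E, ¬ EvDiff f g) →
        ∀ f : ℕ → ℕ, ∃ g ∈ (fun h => gfun e h (R h)) '' E, ¬ EvDiff f g) := by
  constructor
  · rintro g1 ⟨h1, hh1, rfl⟩ g2 ⟨h2, hh2, rfl⟩ hne
    have hne' : h1 ≠ h2 := by
      rintro rfl; exact hne rfl
    obtain ⟨i0, hi0⟩ := Function.ne_iff.mp hne'
    obtain ⟨n, hn⟩ := hE h1 hh1 h2 hh2 hne'
    refine ⟨max (2 * n) (i0 + 1), fun m hm => ?_⟩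
    simp only [gfun]
    rcases Nat.even_or_odd m with ⟨k, hk⟩ | ⟨k, hk⟩
    · have hmod : m % 2 = 0 := by omega
      simp only [hmod, if_true]
      apply hn
      have : 2 * n ≤ m := le_trans (le_max_left _ _) hm
      omega
    · have hmod : ¬ m % 2 = 0 := by omega
      simp only [hmod, if_false]
      intro heq
      have := he.injective heq
      have hfun : (fun i : Fin m => h1 i.1) = fun i : Fin m => h2 i.1 := by
        obtain ⟨-, h2'⟩ := Sigma.mk.inj_iff.mp this
        exact congrArg Prod.fst (eq_of_heq h2')
      have hlt : i0 < m := by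
        have : i0 + 1 ≤ m := le_trans (le_max_right _ _) hm
        omega
      exact hi0 (congrFun hfun ⟨i0, hlt⟩)
  · intro hmax f
    obtain ⟨h, hh, hned⟩ := hmax (fun n => f (2 * n))
    refine ⟨gfun e h (R h), ⟨h, hh, rfl⟩, ?_⟩
    rintro ⟨n, hn⟩
    apply hned
    refine ⟨n, fun m hm => ?_⟩
    intro heq
    have h2m : gfun e h (R h) (2 * m) = h m := by
      simp [gfun, Nat.mul_div_cancel_left m (by norm_num : 0 < 2), Nat.mul_mod_right]
    exact hn (2 * m) (by omega) (heq.trans h2m.symm)
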